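/- If the curvatures of a surface satisfy α·H + β·H' + γ = 0, then the curvatures of its parallel surface at distance a, related by H = (εH̄ + aK̄')·Δ⁻¹, H' = εH̄'·Δ⁻¹, where Δ = 1 + 2aεH̄ + a²K̄' ≠ 0 and ε² = 1, satisfy ε(α + 2aγ)·H̄ + εβ·H̄' + γ = −a(α + aγ)·K̄'. -/

import Mathlib

/-- If α·H + β·H' + γ = 0 then the invariants of the parallel surface satisfy
ε(α + 2aγ)·Hb + εβ·Hb' + γ = −a(α + aγ)·Kb'. -/
theorem stmt5 (a α β γ Hb Hb' Kb' ε : ℝ)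
    (hε : ε = 1 ∨ ε = -1)
    (Δ : ℝ) (hΔdef : Δ = 1 + 2 * a * ε * Hb + a ^ 2 * Kb') (hΔ : Δ ≠ 0)
    (H H' : ℝ)
    (hH : H = (ε * Hb + a * Kb') / Δ) (hH' : H' = ε * Hb' / Δ)
    (hrel : α * H + β * H' + γ = 0) :
    ε * (α + 2 * a * γ) * Hb + ε * β * Hb' + γ = -(a * (α + a * γ)) * Kb' := by
  subst hH hH' hΔdef
  have hΔ2 : 1 + ε * Hb * a * 2 + a ^ 2 * Kb' ≠ 0 := by convert hΔ using 1; ring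
  field_simp at hrel
  rcases hε with h | h <;> subst h <;> nlinarith [hrel, sq_nonneg a]
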